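/- For every integer n ≥ 3, the edge ideal I(C_n) of the n-cycle is bridge-friendly if and only if n ∈ {3, 5, 6}. -/

import Mathlib

open scoped Classical

noncomputable section

namespace ChauHaMaithani

variable {V : Type*}

/-- The lcm of a finite set of monomials (exponent vectors): pointwise maximum. -/
def mlcm (σ : Finset (V → ℕ)) : V → ℕ := fun v => σ.sup fun g => g v

/-- `m` is a bridge of `σ`: `m ∈ σ` and dropping `m` does not change the lcm. -/
def IsBridge (σ : Finset (V → ℕ)) (m : V → ℕ) : Prop :=
  m ∈ σ ∧ mlcm (σ.erase m) = mlcm σ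

/-- `m` is a gap of `σ`: `m ∉ σ` and adding `m` does not change the lcm. -/
def IsGap (σ : Finset (V → ℕ)) (m : V → ℕ) : Prop :=
  m ∉ σ ∧ mlcm (insert m σ) = mlcm σ

/-- A total order `≻` on monomials is encoded by a ranking function `ord`:
`m ≻ m'` iff `ord m' < ord m` (injectivity on the generating set is assumed separately).
`m` is a true gap of `σ` if it is a gap and every bridge of `σ ∪ {m}` dominated by `m`
is already a bridge of `σ`. -/
def IsTrueGap (ord : (V → ℕ) → ℕ) (σ : Finset (V → ℕ)) (m : V → ℕ) : Prop :=
  IsGap σ m ∧ ∀ m', IsBridge (insert m σ) m' → ord m' < ord m → IsBridge σ m'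

/-- `σ` is type-1: it has a true gap (in `M`) dominating none of its bridges. -/
def Type1 (M : Finset (V → ℕ)) (ord : (V → ℕ) → ℕ) (σ : Finset (V → ℕ)) : Prop :=
  ∃ m ∈ M, IsTrueGap ord σ m ∧ ∀ b, IsBridge σ b → ¬ ord b < ord m

/-- `σ` is potentially-type-2: it has a bridge dominating none of its true gaps. -/
def PotType2 (M : Finset (V → ℕ)) (ord : (V → ℕ) → ℕ) (σ : Finset (V → ℕ)) : Prop :=
  ∃ b, IsBridge σ b ∧ ∀ m ∈ M, IsTrueGap ord σ m → ¬ ord m < ord b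

/-- `b` is the `≻`-smallest bridge of `σ`. -/
def IsSBridge (ord : (V → ℕ) → ℕ) (σ : Finset (V → ℕ)) (b : V → ℕ) : Prop :=
  IsBridge σ b ∧ ∀ b', IsBridge σ b' → ord b ≤ ord b'

/-- `σ` is type-2. -/
def Type2 (M : Finset (V → ℕ)) (ord : (V → ℕ) → ℕ) (σ : Finset (V → ℕ)) : Prop :=
  PotType2 M ord σ ∧
    ∀ σ' : Finset (V → ℕ), σ' ⊆ M → σ' ≠ σ → PotType2 M ord σ' →
      ∀ b b', IsSBridge ord σ b → IsSBridge ord σ' b' →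
        σ'.erase b' = σ.erase b → ord b < ord b'

/-- `M` (the minimal generating set of a monomial ideal) is bridge-friendly w.r.t. `ord`:
every potentially-type-2 subset is type-2. -/
def BridgeFriendlyWrt (M : Finset (V → ℕ)) (ord : (V → ℕ) → ℕ) : Prop :=
  ∀ σ ⊆ M, PotType2 M ord σ → Type2 M ord σ

/-- `M` is bridge-friendly: bridge-friendly w.r.t. some total order on `M`. -/
def BridgeFriendly (M : Finset (V → ℕ)) : Prop :=
  ∃ ord : (V → ℕ) → ℕ, Set.InjOn ord M ∧ BridgeFriendlyWrt M ord

/-- `σ = {m_1 ≻ ⋯ ≻ m_k} ⊆ M` is Lyubeznik-critical w.r.t. `ord`: there is no `m ∈ M` with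
`m_t ≻ m` and `m ∣ lcm(m_1, …, m_t)` for some `1 < t ≤ k`. -/
def LyubCritical (M : Finset (V → ℕ)) (ord : (V → ℕ) → ℕ) (σ : Finset (V → ℕ)) : Prop :=
  σ ⊆ M ∧ ¬ ∃ m ∈ M, ∃ t ∈ σ, (∃ u ∈ σ, ord t < ord u) ∧ ord m < ord t ∧
      ∀ v, m v ≤ mlcm (σ.filter fun g => ord t ≤ ord g) v

/-- `M` is Lyubeznik: for some total order on `M`, no Lyubeznik-critical subset has a
bridge (equivalently, the associated Lyubeznik resolution is minimal). -/
def IsLyubeznik (M : Finset (V → ℕ)) : Prop :=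
  ∃ ord : (V → ℕ) → ℕ, Set.InjOn ord M ∧
    ∀ σ : Finset (V → ℕ), LyubCritical M ord σ → ∀ b, ¬ IsBridge σ b

/-- The quadratic monomial `xy` attached to an edge `e = {x,y}`. -/
def edgeMon (e : Sym2 V) : V → ℕ := fun v => if v ∈ e then 1 else 0

/-- `mingens(I(G))`: the edge monomials of `G`. -/
def edgeGens [Fintype V] (G : SimpleGraph V) : Finset (V → ℕ) :=
  (Finset.univ.filter fun e : Sym2 V => e ∈ G.edgeSet).image edgeMon

/-- `mingens(I(G)^n)`: the monomials that are products of `n` edges of `G`. -/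
def edgePowGens [Fintype V] (G : SimpleGraph V) (n : ℕ) : Finset (V → ℕ) :=
  (Finset.univ.filter fun f : Fin n → Sym2 V => ∀ i, f i ∈ G.edgeSet).image
    fun f => ∑ i, edgeMon (f i)

/-- A graph is chordal if it contains no induced cycle of length at least 4. -/
def Chordal (G : SimpleGraph V) : Prop :=
  ∀ n, 4 ≤ n → IsEmpty (SimpleGraph.cycleGraph n ↪g G)


/-- Vertex type of the graph `L(a,b,c)`: `Sum.inl 0` is `x`, `Sum.inl 1` is `y`,
and the remaining summands are the leaves `x_i`, the leaves `y_j`, and the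
triangle tips `z_k`. -/
abbrev LV (a b c : ℕ) := Fin 2 ⊕ (Fin a ⊕ Fin b ⊕ Fin c)

/-- The graph `L(a,b,c)`: `c` triangles glued along the common edge `{x,y}`, with
`a` leaves attached to `x` and `b` leaves attached to `y`. -/
def LGraph (a b c : ℕ) : SimpleGraph (LV a b c) :=
  SimpleGraph.fromRel fun u v =>
    (u = Sum.inl 0 ∧ v = Sum.inl 1) ∨
    (∃ i, u = Sum.inl 0 ∧ v = Sum.inr (Sum.inl i)) ∨
    (∃ j, u = Sum.inl 1 ∧ v = Sum.inr (Sum.inr (Sum.inl j))) ∨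
    (∃ k, (u = Sum.inl 0 ∨ u = Sum.inl 1) ∧ v = Sum.inr (Sum.inr (Sum.inr k)))

/-- The graph `BF(T,w)`: attach `w(e)` new triangles along each edge `e` of `T`. -/
def BFGraph {VT : Type} (T : SimpleGraph VT) (w : T.edgeSet → ℕ) :
    SimpleGraph (VT ⊕ (Σ e : T.edgeSet, Fin (w e))) :=
  SimpleGraph.fromRel fun u v =>
    (∃ a b, u = Sum.inl a ∧ v = Sum.inl b ∧ T.Adj a b) ∨
    (∃ (a : VT) (e : T.edgeSet) (i : Fin (w e)), u = Sum.inl a ∧ v = Sum.inr ⟨e, i⟩ ∧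
      a ∈ (e : Sym2 VT))

/-- The kite graph: the diamond (`K₄` minus the edge `{2,3}`) together with a pendant
vertex `4` attached to the degree-two vertex `2`. -/
def kite : SimpleGraph (Fin 5) :=
  SimpleGraph.fromEdgeSet {s(0,1), s(0,2), s(0,3), s(1,2), s(1,3), s(2,4)}

/-- The gem graph: the path `0-1-2-3` together with a vertex `4` adjacent to all of
`0,1,2,3`. -/
def gem : SimpleGraph (Fin 5) :=
  SimpleGraph.fromEdgeSet {s(0,1), s(1,2), s(2,3), s(0,4), s(1,4), s(2,4), s(3,4)}

/-- The tadpole graph: the triangle `0,1,2` with a path `0-3-4` of length 2 attached. -/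
def tadpole : SimpleGraph (Fin 5) :=
  SimpleGraph.fromEdgeSet {s(0,1), s(1,2), s(0,2), s(0,3), s(3,4)}

/-- The butterfly graph: two triangles `0,1,2` and `0,3,4` sharing the vertex `0`. -/
def butterfly : SimpleGraph (Fin 5) :=
  SimpleGraph.fromEdgeSet {s(0,1), s(1,2), s(0,2), s(0,3), s(3,4), s(0,4)}

/-- The net graph: the triangle `0,1,2` with pendant vertices `3,4,5` attached to
`0,1,2` respectively. -/
def net : SimpleGraph (Fin 6) :=
  SimpleGraph.fromEdgeSet {s(0,1), s(1,2), s(0,2), s(0,3), s(1,4), s(2,5)}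


section Cyc
open Fin.CommRing
variable {n : ℕ} [NeZero n]

variable {n : ℕ} [NeZero n]

lemma fin_cast_inj {a b : ℕ} (ha : a < n) (hb : b < n) : ((a : Fin n) = (b : Fin n)) ↔ a = b := by
  rw [Fin.ext_iff, Fin.val_natCast, Fin.val_natCast, Nat.mod_eq_of_lt ha, Nat.mod_eq_of_lt hb]

lemma shift_eq_iff (j : Fin n) (a b : ℕ) : j + (a : Fin n) = j + (b : Fin n) ↔ a % n = b % n := by
  rw [add_right_inj, Fin.ext_iff, Fin.val_natCast, Fin.val_natCast]

lemma add_one_shift (j : Fin n) (a : ℕ) : (j + (a : Fin n)) + 1 = j + ((a + 1 : ℕ) : Fin n) := by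
  rw [Nat.cast_add, Nat.cast_one, add_assoc]

lemma sub_one_shift (j : Fin n) (a : ℕ) : (j + ((a + 1 : ℕ) : Fin n)) - 1 = j + (a : Fin n) := by
  rw [Nat.cast_add, Nat.cast_one, ← add_assoc, add_sub_cancel_right]

lemma add_two_shift (j : Fin n) (a : ℕ) : (j + (a : Fin n)) + 2 = j + ((a + 2 : ℕ) : Fin n) := by
  rw [Nat.cast_add, Nat.cast_ofNat, add_assoc]

lemma sub_two_shift (j : Fin n) (a : ℕ) : (j + ((a + 2 : ℕ) : Fin n)) - 2 = j + (a : Fin n) := by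
  rw [Nat.cast_add, Nat.cast_ofNat, ← add_assoc, add_sub_cancel_right]

lemma one_ne_zero' (hn : 3 ≤ n) : (1 : Fin n) ≠ 0 := by
  rw [← Nat.cast_one, ← Nat.cast_zero, Ne, fin_cast_inj (by omega) (by omega)]; omega

lemma two_ne_zero' (hn : 3 ≤ n) : (2 : Fin n) ≠ 0 := by
  rw [← Nat.cast_ofNat, ← Nat.cast_zero, Ne, fin_cast_inj (by omega) (by omega)]; omega

def emon (i : Fin n) : Fin n → ℕ := edgeMon s(i, i + 1)

lemma emon_apply (i v : Fin n) : emon i v = if v = i ∨ v = i + 1 then 1 else 0 := by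
  simp [emon, edgeMon]

lemma emon_inj (hn : 3 ≤ n) : Function.Injective (emon (n := n)) := by
  intro i j h
  have h1 : emon i i = emon j i := congrFun h i
  have h2 : emon i (i + 1) = emon j (i + 1) := congrFun h (i + 1)
  rw [emon_apply, emon_apply, if_pos (Or.inl rfl)] at h1
  rw [emon_apply, emon_apply, if_pos (Or.inr rfl)] at h2
  have hj1 : i = j ∨ i = j + 1 := by by_contra hc; rw [if_neg (by tauto)] at h1; omega
  have hj2 : i + 1 = j ∨ i + 1 = j + 1 := by by_contra hc; rw [if_neg (by tauto)] at h2; omega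
  rcases hj1 with h1' | h1'
  · exact h1'
  rcases hj2 with h2' | h2'
  · exfalso
    have : j = j + 2 := by
      have h3 : j = j + 1 + 1 := by rw [← h1']; exact h2'.symm
      rwa [add_assoc, one_add_one_eq_two] at h3
    exact two_ne_zero' hn (by rwa [left_eq_add] at this)
  · exact add_right_cancel h2'

def msys (S : Finset (Fin n)) : Finset (Fin n → ℕ) := S.image emon

lemma mlcm_msys (S : Finset (Fin n)) (v : Fin n) :
    mlcm (msys S) v = if v ∈ S ∨ v - 1 ∈ S then 1 else 0 := by
  have hsup : mlcm (msys S) v = S.sup fun i => emon i v := by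
    simp [mlcm, msys, Finset.sup_image]; rfl
  rw [hsup]
  split_ifs with h
  · refine le_antisymm (Finset.sup_le fun i _ => by rw [emon_apply]; split <;> omega) ?_
    rcases h with h | h
    · calc 1 = emon v v := by rw [emon_apply, if_pos (Or.inl rfl)]
        _ ≤ _ := Finset.le_sup (f := fun i => emon i v) h
    · calc 1 = emon (v - 1) v := by rw [emon_apply, if_pos (Or.inr (by rw [sub_add_cancel]))]
        _ ≤ _ := Finset.le_sup (f := fun i => emon i v) h
  · push_neg at h
    refine Nat.le_zero.mp (Finset.sup_le fun i hi => ?_)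
    rw [emon_apply, if_neg]
    rintro (rfl | rfl)
    · exact h.1 hi
    · exact h.2 (by rwa [add_sub_cancel_right])
end Cyc
section Cyc2
open Fin.CommRing
variable {n : ℕ} [NeZero n]

def CBri (S : Finset (Fin n)) (b : Fin n) : Prop :=
  b ∈ S ∧ b - 1 ∈ S ∧ b + 1 ∈ S

def CTG (w : Fin n → ℕ) (S : Finset (Fin n)) (g : Fin n) : Prop :=
  g ∉ S ∧ g - 1 ∈ S ∧ g + 1 ∈ S ∧ (g + 2 ∈ S → ¬ w (g + 1) < w g) ∧
    (g - 2 ∈ S → ¬ w (g - 1) < w g)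

def CPot (w : Fin n → ℕ) (S : Finset (Fin n)) : Prop :=
  ∃ b, CBri S b ∧ ∀ g, CTG w S g → ¬ w g < w b

def CSB (w : Fin n → ℕ) (S : Finset (Fin n)) (b : Fin n) : Prop :=
  CBri S b ∧ ∀ j, CBri S j → w b ≤ w j

def CGood (n : ℕ) [NeZero n] (w : Fin n → ℕ) : Prop :=
  ∀ S T : Finset (Fin n), CPot w S → CPot w T → ∀ b b' : Fin n,
    CSB w S b → CSB w T b' → S.erase b = T.erase b' → S = T

instance (S : Finset (Fin n)) (b : Fin n) : Decidable (CBri S b) := by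
  unfold CBri; infer_instance
instance (w : Fin n → ℕ) (S : Finset (Fin n)) (g : Fin n) : Decidable (CTG w S g) := by
  unfold CTG; infer_instance
instance (w : Fin n → ℕ) (S : Finset (Fin n)) : Decidable (CPot w S) := by
  unfold CPot; infer_instance
instance (w : Fin n → ℕ) (S : Finset (Fin n)) (b : Fin n) : Decidable (CSB w S b) := by
  unfold CSB; infer_instance
instance (w : Fin n → ℕ) : Decidable (CGood n w) := by
  unfold CGood; infer_instance

lemma mlcm_msys_eq_iff {S T : Finset (Fin n)} :
    mlcm (msys S) = mlcm (msys T) ↔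
      ∀ v, (v ∈ S ∨ v - 1 ∈ S) ↔ (v ∈ T ∨ v - 1 ∈ T) := by
  constructor
  · intro h v
    have hv := congrFun h v
    rw [mlcm_msys, mlcm_msys] at hv
    split_ifs at hv with h1 h2 h2 <;> tauto
  · intro h
    funext v
    rw [mlcm_msys, mlcm_msys]
    exact if_congr (h v) rfl rfl

lemma msys_erase {inst : DecidableEq (Fin n → ℕ)} (hn : 3 ≤ n) (S : Finset (Fin n)) (i : Fin n) :
    msys (S.erase i) = @Finset.erase _ inst (msys S) (emon i) := by
  ext m
  simp only [msys, Finset.mem_image, Finset.mem_erase]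
  constructor
  · rintro ⟨j, hj, rfl⟩
    exact ⟨fun h => hj.1 (emon_inj hn h), j, hj.2, rfl⟩
  · rintro ⟨hne, j, hj, rfl⟩
    exact ⟨j, ⟨fun h => hne (by rw [h]), hj⟩, rfl⟩

lemma msys_insert {inst : DecidableEq (Fin n → ℕ)} (S : Finset (Fin n)) (i : Fin n) :
    msys (insert i S) = @insert _ _ (@Finset.instInsert _ inst) (emon i) (msys S) := by
  ext m
  simp only [msys, Finset.mem_image, Finset.mem_insert]
  constructor
  · rintro ⟨j, hj, rfl⟩
    rcases hj with rfl | hj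
    · exact Or.inl rfl
    · exact Or.inr ⟨j, hj, rfl⟩
  · rintro (rfl | ⟨j, hj, rfl⟩)
    · exact ⟨i, Or.inl rfl, rfl⟩
    · exact ⟨j, Or.inr hj, rfl⟩

lemma mem_msys (hn : 3 ≤ n) {S : Finset (Fin n)} {i : Fin n} :
    emon i ∈ msys S ↔ i ∈ S := by
  constructor
  · intro h
    obtain ⟨j, hj, hji⟩ := Finset.mem_image.mp h
    rwa [← emon_inj hn hji]
  · exact fun h => Finset.mem_image_of_mem _ h

lemma mem_msys' {S : Finset (Fin n)} {m : Fin n → ℕ} (h : m ∈ msys S) :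
    ∃ i ∈ S, m = emon i := by
  obtain ⟨j, hj, hji⟩ := Finset.mem_image.mp h
  exact ⟨j, hj, hji.symm⟩

lemma isBridge_iff (hn : 3 ≤ n) {S : Finset (Fin n)} {i : Fin n} :
    IsBridge (msys S) (emon i) ↔ CBri S i := by
  have h1 : i - 1 ≠ i := fun h => one_ne_zero' hn (by rwa [sub_eq_self] at h)
  have h2 : i + 1 ≠ i := fun h => one_ne_zero' hn (by rwa [add_eq_left] at h)
  rw [IsBridge, mem_msys hn, ← msys_erase hn, mlcm_msys_eq_iff]
  constructor
  · rintro ⟨hi, hcov⟩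
    refine ⟨hi, ?_, ?_⟩
    · have := (hcov i).mpr (Or.inl hi)
      rcases this with h | h
      · exact absurd (Finset.mem_erase.mp h).1 (by simp)
      · exact (Finset.mem_erase.mp h).2
    · have := (hcov (i + 1)).mpr (Or.inr (by rw [add_sub_cancel_right]; exact hi))
      rcases this with h | h
      · exact (Finset.mem_erase.mp h).2
      · rw [add_sub_cancel_right] at h
        exact absurd (Finset.mem_erase.mp h).1 (by simp)
  · rintro ⟨hi, hm, hp⟩
    refine ⟨hi, fun v => ?_⟩
    by_cases hv1 : v = i
    · subst hv1
      simp only [Finset.mem_erase]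
      constructor
      · rintro (⟨_, h⟩ | ⟨_, h⟩) <;> tauto
      · intro _; exact Or.inr ⟨h1, hm⟩
    · by_cases hv2 : v = i + 1
      · subst hv2
        simp only [Finset.mem_erase, add_sub_cancel_right]
        constructor
        · rintro (⟨_, h⟩ | ⟨_, h⟩)
          · exact Or.inl h
          · exact Or.inr h
        · intro _; exact Or.inl ⟨h2, hp⟩
      · have hv3 : v - 1 ≠ i := fun h => hv2 (by rw [← h, sub_add_cancel])
        simp only [Finset.mem_erase]
        constructor
        · rintro (⟨_, h⟩ | ⟨_, h⟩) <;> tauto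
        · rintro (h | h)
          · exact Or.inl ⟨hv1, h⟩
          · exact Or.inr ⟨hv3, h⟩

lemma isGap_iff (hn : 3 ≤ n) {S : Finset (Fin n)} {i : Fin n} :
    IsGap (msys S) (emon i) ↔ (i ∉ S ∧ i - 1 ∈ S ∧ i + 1 ∈ S) := by
  have h2 : i + 1 ≠ i := fun h => one_ne_zero' hn (by rwa [add_eq_left] at h)
  rw [IsGap, mem_msys hn, ← msys_insert, mlcm_msys_eq_iff]
  constructor
  · rintro ⟨hi, hcov⟩
    refine ⟨hi, ?_, ?_⟩
    · have := (hcov i).mp (Or.inl (Finset.mem_insert_self _ _))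
      rcases this with h | h
      · exact absurd h hi
      · exact h
    · have := (hcov (i + 1)).mp
        (Or.inr (by rw [add_sub_cancel_right]; exact Finset.mem_insert_self _ _))
      rcases this with h | h
      · exact h
      · rw [add_sub_cancel_right] at h; exact absurd h hi
  · rintro ⟨hi, hm, hp⟩
    refine ⟨hi, fun v => ?_⟩
    by_cases hv1 : v = i
    · subst hv1
      simp only [Finset.mem_insert]
      tauto
    · by_cases hv2 : v = i + 1
      · subst hv2
        simp only [Finset.mem_insert, add_sub_cancel_right]
        tauto
      · have hv3 : v - 1 ≠ i := fun h => hv2 (by rw [← h, sub_add_cancel])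
        simp only [Finset.mem_insert]
        tauto

lemma isTrueGap_iff (hn : 3 ≤ n) (ord : (Fin n → ℕ) → ℕ) {S : Finset (Fin n)} {i : Fin n} :
    IsTrueGap ord (msys S) (emon i) ↔ CTG (fun k => ord (emon k)) S i := by
  have h2p : i + 2 ≠ i := fun h => two_ne_zero' hn (by rwa [add_eq_left] at h)
  have h2m : i - 2 ≠ i := fun h => two_ne_zero' hn (by rwa [sub_eq_self] at h)
  rw [IsTrueGap, isGap_iff hn, CTG]
  constructor
  · rintro ⟨⟨hi, hm, hp⟩, hcl⟩
    refine ⟨hi, hm, hp, ?_, ?_⟩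
    · intro hp2 hlt
      have hbr : IsBridge (msys (insert i S)) (emon (i + 1)) := by
        rw [isBridge_iff hn]
        refine ⟨Finset.mem_insert_of_mem hp, ?_, ?_⟩
        · rw [add_sub_cancel_right]; exact Finset.mem_insert_self _ _
        · rw [add_assoc, one_add_one_eq_two]; exact Finset.mem_insert_of_mem hp2
      rw [msys_insert] at hbr
      have hres := hcl (emon (i + 1)) hbr hlt
      rw [isBridge_iff hn] at hres
      obtain ⟨-, hres2, -⟩ := hres
      rw [add_sub_cancel_right] at hres2
      exact hi hres2
    · intro hm2 hlt
      have hbr : IsBridge (msys (insert i S)) (emon (i - 1)) := by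
        rw [isBridge_iff hn]
        refine ⟨Finset.mem_insert_of_mem hm, ?_, ?_⟩
        · rw [sub_sub, one_add_one_eq_two]; exact Finset.mem_insert_of_mem hm2
        · rw [sub_add_cancel]; exact Finset.mem_insert_self _ _
      rw [msys_insert] at hbr
      have hres := hcl (emon (i - 1)) hbr hlt
      rw [isBridge_iff hn] at hres
      obtain ⟨-, -, hres3⟩ := hres
      rw [sub_add_cancel] at hres3
      exact hi hres3
  · rintro ⟨hi, hm, hp, c1, c2⟩
    refine ⟨⟨hi, hm, hp⟩, ?_⟩
    intro m' hbr hlt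
    rw [← msys_insert] at hbr
    obtain ⟨j, hjmem, rfl⟩ := mem_msys' hbr.1
    rw [isBridge_iff hn] at hbr
    obtain ⟨hj1, hj2, hj3⟩ := hbr
    by_cases hji : j = i
    · subst hji; exact absurd hlt (lt_irrefl _)
    have hjS : j ∈ S := (Finset.mem_insert.mp hj1).resolve_left hji
    rw [isBridge_iff hn]
    by_cases hc1 : j - 1 = i
    · exfalso
      have hj' : j = i + 1 := by rw [← hc1, sub_add_cancel]
      subst hj'
      rw [add_assoc, one_add_one_eq_two] at hj3
      have : i + 2 ∈ S := (Finset.mem_insert.mp hj3).resolve_left h2p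
      exact c1 this hlt
    by_cases hc2 : j + 1 = i
    · exfalso
      have hj' : j = i - 1 := by rw [← hc2, add_sub_cancel_right]
      subst hj'
      rw [sub_sub, one_add_one_eq_two] at hj2
      have : i - 2 ∈ S := (Finset.mem_insert.mp hj2).resolve_left h2m
      exact c2 this hlt
    · exact ⟨hjS, (Finset.mem_insert.mp hj2).resolve_left hc1,
        (Finset.mem_insert.mp hj3).resolve_left hc2⟩

lemma isSBridge_iff (hn : 3 ≤ n) (ord : (Fin n → ℕ) → ℕ) {S : Finset (Fin n)} {b : Fin n} :
    IsSBridge ord (msys S) (emon b) ↔ CSB (fun k => ord (emon k)) S b := by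
  rw [IsSBridge, CSB, isBridge_iff hn]
  constructor
  · rintro ⟨h1, h2⟩
    exact ⟨h1, fun j hj => h2 (emon j) ((isBridge_iff hn).mpr hj)⟩
  · rintro ⟨h1, h2⟩
    refine ⟨h1, fun b' hb' => ?_⟩
    obtain ⟨j, hj, rfl⟩ := mem_msys' hb'.1
    exact h2 j ((isBridge_iff hn).mp hb')

lemma potType2_iff (hn : 3 ≤ n) (ord : (Fin n → ℕ) → ℕ) {S : Finset (Fin n)} :
    PotType2 (msys Finset.univ) ord (msys S) ↔ CPot (fun k => ord (emon k)) S := by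
  rw [PotType2, CPot]
  constructor
  · rintro ⟨b, hb, hall⟩
    obtain ⟨j, hj, rfl⟩ := mem_msys' hb.1
    refine ⟨j, (isBridge_iff hn).mp hb, fun g hg => ?_⟩
    exact hall (emon g) ((mem_msys hn).mpr (Finset.mem_univ g)) ((isTrueGap_iff hn ord).mpr hg)
  · rintro ⟨b, hb, hall⟩
    refine ⟨emon b, (isBridge_iff hn).mpr hb, fun m hm htg => ?_⟩
    obtain ⟨g, -, rfl⟩ := mem_msys' hm
    exact hall g ((isTrueGap_iff hn ord).mp htg)

lemma val_one' (hn : 3 ≤ n) : (1 : Fin n).val = 1 := by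
  rw [← Nat.cast_one, Fin.val_natCast]; exact Nat.mod_eq_of_lt (by omega)

lemma edgeGens_eq (hn : 3 ≤ n) :
    edgeGens (SimpleGraph.cycleGraph n) = msys (Finset.univ : Finset (Fin n)) := by
  ext m
  simp only [edgeGens, msys, Finset.mem_image, Finset.mem_filter, Finset.mem_univ, true_and]
  constructor
  · rintro ⟨e, he, rfl⟩
    induction e using Sym2.ind with
    | _ u v =>
      rw [SimpleGraph.mem_edgeSet, SimpleGraph.cycleGraph_adj'] at he
      rcases he with h | h
      · have huv : u - v = 1 := by
          rw [Fin.ext_iff, h, val_one' hn]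
        have huv2 : u = v + 1 := by rwa [sub_eq_iff_eq_add'] at huv
        subst huv2
        exact ⟨v, by rw [emon]; exact congrArg edgeMon Sym2.eq_swap⟩
      · have huv : v - u = 1 := by
          rw [Fin.ext_iff, h, val_one' hn]
        have huv2 : v = u + 1 := by rwa [sub_eq_iff_eq_add'] at huv
        subst huv2
        exact ⟨u, rfl⟩
  · rintro ⟨i, rfl⟩
    refine ⟨s(i, i + 1), ?_, rfl⟩
    rw [SimpleGraph.mem_edgeSet, SimpleGraph.cycleGraph_adj']
    right
    rw [add_sub_cancel_left, val_one' hn]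


lemma extend_comp (hn : 3 ≤ n) (w : Fin n → ℕ) :
    (fun k => Function.extend emon w (fun _ => 0) (emon k)) = w :=
  funext fun k => (emon_inj hn).extend_apply w _ k

lemma bf_iff (hn : 3 ≤ n) :
    BridgeFriendly (edgeGens (SimpleGraph.cycleGraph n)) ↔
      ∃ w : Fin n → ℕ, Function.Injective w ∧ CGood n w := by
  rw [edgeGens_eq hn]
  constructor
  · rintro ⟨ord, hinj, hbf⟩
    have hw : Function.Injective fun k => ord (emon k) := by
      intro a b hab
      exact emon_inj hn (hinj (Finset.mem_coe.mpr ((mem_msys hn).mpr (Finset.mem_univ a)))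
        (Finset.mem_coe.mpr ((mem_msys hn).mpr (Finset.mem_univ b))) hab)
    refine ⟨_, hw, ?_⟩
    intro S T hS hT b b' hSb hTb her
    by_contra hne
    have hsub : msys S ⊆ msys Finset.univ := Finset.image_subset_image (Finset.subset_univ S)
    have hsub' : msys T ⊆ msys Finset.univ := Finset.image_subset_image (Finset.subset_univ T)
    have hmne : msys S ≠ msys T := fun h => hne (Finset.image_injective (emon_inj hn) h)
    have hpotS : PotType2 (msys Finset.univ) ord (msys S) := (potType2_iff hn ord).mpr hS
    have hpotT : PotType2 (msys Finset.univ) ord (msys T) := (potType2_iff hn ord).mpr hT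
    have ht2S := hbf (msys S) hsub hpotS
    have ht2T := hbf (msys T) hsub' hpotT
    have hb := (isSBridge_iff hn ord).mpr hSb
    have hb' := (isSBridge_iff hn ord).mpr hTb
    have her' : ∀ inst : DecidableEq (Fin n → ℕ),
        @Finset.erase _ inst (msys T) (emon b') = @Finset.erase _ inst (msys S) (emon b) :=
      fun inst => by rw [← msys_erase hn, ← msys_erase hn, her]
    have h1 := ht2S.2 (msys T) hsub' hmne.symm hpotT (emon b) (emon b') hb hb' (her' _)
    have h2 := ht2T.2 (msys S) hsub hmne hpotS (emon b') (emon b) hb' hb (her' _).symm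
    omega
  · rintro ⟨w, hw, hgood⟩
    refine ⟨Function.extend emon w (fun _ => 0), ?_, ?_⟩
    · intro m1 hm1 m2 hm2 h12
      obtain ⟨i, -, rfl⟩ := mem_msys' (Finset.mem_coe.mp hm1)
      obtain ⟨j, -, rfl⟩ := mem_msys' (Finset.mem_coe.mp hm2)
      rw [(emon_inj hn).extend_apply, (emon_inj hn).extend_apply] at h12
      rw [hw h12]
    · intro σ hsub hpot
      obtain ⟨S, -, rfl⟩ := Finset.subset_image_iff.mp hsub
      refine ⟨hpot, ?_⟩
      intro σ' hsub' hne' hpot' b b' hsb hsb' her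
      obtain ⟨T, -, rfl⟩ := Finset.subset_image_iff.mp hsub'
      obtain ⟨i, -, rfl⟩ := mem_msys' hsb.1.1
      obtain ⟨j, -, rfl⟩ := mem_msys' hsb'.1.1
      exfalso
      apply hne'
      have hpotC := (potType2_iff hn _).mp hpot
      have hpotC' := (potType2_iff hn _).mp hpot'
      have hCb := (isSBridge_iff hn _).mp hsb
      have hCb' := (isSBridge_iff hn _).mp hsb'
      rw [extend_comp hn] at hpotC hpotC' hCb hCb'
      have her2 : msys (T.erase j) = msys (S.erase i) := by
        rw [msys_erase hn, msys_erase hn]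
        exact her
      have herC : T.erase j = S.erase i := Finset.image_injective (emon_inj hn) her2
      have hST : S = T := hgood S T hpotC hpotC' i j hCb hCb' herC.symm
      rw [hST]


lemma shift_eq_iff' {j : Fin n} {a b : ℕ} (ha : a < n) (hb : b < n) :
    j + (a : Fin n) = j + (b : Fin n) ↔ a = b := by
  rw [shift_eq_iff, Nat.mod_eq_of_lt ha, Nat.mod_eq_of_lt hb]

lemma shift_ne {j : Fin n} {a b : ℕ} (ha : a < n) (hb : b < n) (hab : a ≠ b) :
    j + (a : Fin n) ≠ j + (b : Fin n) := by
  rw [Ne, shift_eq_iff' ha hb]; exact hab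

lemma add_one_shift' (j : Fin n) {a b : ℕ} (h : b = a + 1) :
    (j + (a : Fin n)) + 1 = j + (b : Fin n) := by subst h; exact add_one_shift j a

lemma sub_one_shift' (j : Fin n) {a b : ℕ} (h : a = b + 1) :
    (j + (a : Fin n)) - 1 = j + (b : Fin n) := by subst h; exact sub_one_shift j b

lemma add_two_shift' (j : Fin n) {a b : ℕ} (h : b = a + 2) :
    (j + (a : Fin n)) + 2 = j + (b : Fin n) := by subst h; exact add_two_shift j a

lemma sub_two_shift' (j : Fin n) {a b : ℕ} (h : a = b + 2) :
    (j + (a : Fin n)) - 2 = j + (b : Fin n) := by subst h; exact sub_two_shift j b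


def sft (j : Fin n) (a : ℕ) : Fin n := j + (a : Fin n)

lemma sft_inj {j : Fin n} {a b : ℕ} (ha : a < n) (hb : b < n) :
    sft j a = sft j b ↔ a = b := shift_eq_iff' ha hb

lemma sft_add_one (j : Fin n) {a b : ℕ} (h : b = a + 1) : sft j a + 1 = sft j b :=
  add_one_shift' j h

lemma sft_sub_one (j : Fin n) {a b : ℕ} (h : a = b + 1) : sft j a - 1 = sft j b :=
  sub_one_shift' j h

lemma sft_add_two (j : Fin n) {a b : ℕ} (h : b = a + 2) : sft j a + 2 = sft j b :=
  add_two_shift' j h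

lemma sft_sub_two (j : Fin n) {a b : ℕ} (h : a = b + 2) : sft j a - 2 = sft j b :=
  sub_two_shift' j h

lemma neg_seven (hn7 : 7 ≤ n) (w : Fin n → ℕ) (hw : Function.Injective w) : ¬ CGood n w := by
  intro hgood
  obtain ⟨i, -, hmin⟩ := Finset.exists_min_image Finset.univ w ⟨0, Finset.mem_univ 0⟩
  set j : Fin n := i - ((3:ℕ) : Fin n) with hj
  set s : ℕ → Fin n := sft j with hs
  have hij : s 3 = i := by rw [hs, sft, hj, sub_add_cancel]
  have key : ∀ a b : ℕ, a < 7 → b < 7 → (s a = s b ↔ a = b) :=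
    fun a b ha hb => sft_inj (by omega) (by omega)
  have hmin' : ∀ a : ℕ, a < 7 → a ≠ 3 → w (s 3) < w (s a) := by
    intro a ha h3
    refine lt_of_le_of_ne (by rw [hij]; exact hmin _ (Finset.mem_univ _)) ?_
    intro h
    exact h3 (((key 3 a (by omega) ha).mp (hw h)).symm)
  set E : Finset (Fin n) := {s 1, s 3, s 5} with hE
  set S : Finset (Fin n) := insert (s 2) E with hS
  set T : Finset (Fin n) := insert (s 4) E with hT
  have memS : ∀ a : ℕ, a < 7 → (s a ∈ S ↔ a = 1 ∨ a = 2 ∨ a = 3 ∨ a = 5) := by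
    intro a ha
    rw [hS, hE, Finset.mem_insert, Finset.mem_insert, Finset.mem_insert, Finset.mem_singleton,
      key a 2 ha (by omega), key a 1 ha (by omega), key a 3 ha (by omega), key a 5 ha (by omega)]
    tauto
  have memT : ∀ a : ℕ, a < 7 → (s a ∈ T ↔ a = 1 ∨ a = 3 ∨ a = 4 ∨ a = 5) := by
    intro a ha
    rw [hT, hE, Finset.mem_insert, Finset.mem_insert, Finset.mem_insert, Finset.mem_singleton,
      key a 4 ha (by omega), key a 1 ha (by omega), key a 3 ha (by omega), key a 5 ha (by omega)]
    tauto
  have s7eq : ∀ k : ℕ, 0 < k → k < 7 → s 7 ≠ s k := by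
    intro k hk0 hk h
    rw [hs, sft, sft, shift_eq_iff, Nat.mod_eq_of_lt (show k < n by omega)] at h
    rcases eq_or_lt_of_le hn7 with rfl | h7
    · omega
    · rw [Nat.mod_eq_of_lt h7] at h; omega
  have s7S : s 7 ∉ S := by
    intro hmem
    rw [hS, hE, Finset.mem_insert, Finset.mem_insert, Finset.mem_insert,
      Finset.mem_singleton] at hmem
    rcases hmem with h | h | h | h
    exacts [s7eq 2 (by omega) (by omega) h, s7eq 1 (by omega) (by omega) h, s7eq 3 (by omega) (by omega) h, s7eq 5 (by omega) (by omega) h]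
  have s7T : s 7 ∉ T := by
    intro hmem
    rw [hT, hE, Finset.mem_insert, Finset.mem_insert, Finset.mem_insert,
      Finset.mem_singleton] at hmem
    rcases hmem with h | h | h | h
    exacts [s7eq 4 (by omega) (by omega) h, s7eq 1 (by omega) (by omega) h, s7eq 3 (by omega) (by omega) h, s7eq 5 (by omega) (by omega) h]
  -- sub/add arithmetic facts
  have gcase : ∀ g : Fin n, g - 1 ∈ S ∨ g - 1 ∈ T → g = s 2 ∨ g = s 3 ∨ g = s 4 ∨ g = s 5 ∨ g = s 6 := by
    intro g hg
    have : g - 1 = s 1 ∨ g - 1 = s 2 ∨ g - 1 = s 3 ∨ g - 1 = s 4 ∨ g - 1 = s 5 := by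
      rcases hg with hg | hg
      · rw [hS, hE, Finset.mem_insert, Finset.mem_insert, Finset.mem_insert,
          Finset.mem_singleton] at hg
        tauto
      · rw [hT, hE, Finset.mem_insert, Finset.mem_insert, Finset.mem_insert,
          Finset.mem_singleton] at hg
        tauto
    have hgg : ∀ a : ℕ, g - 1 = s a → g = s (a + 1) := by
      intro a ha
      rw [hs, ← sft_add_one j rfl, ← hs, ← ha, sub_add_cancel]
    rcases this with h | h | h | h | h
    exacts [Or.inl (hgg 1 h), Or.inr (Or.inl (hgg 2 h)), Or.inr (Or.inr (Or.inl (hgg 3 h))),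
      Or.inr (Or.inr (Or.inr (Or.inl (hgg 4 h)))), Or.inr (Or.inr (Or.inr (Or.inr (hgg 5 h))))]
  have hTGS : ∀ g, ¬ CTG w S g := by
    rintro g ⟨hg0, hg1, hg2, hg3, hg4⟩
    rcases gcase g (Or.inl hg1) with rfl | rfl | rfl | rfl | rfl
    · exact hg0 ((memS 2 (by omega)).mpr (by omega))
    · exact hg0 ((memS 3 (by omega)).mpr (by omega))
    · refine hg4 ?_ ?_
      · rw [hs, sft_sub_two j rfl, ← hs]; exact (memS 2 (by omega)).mpr (by omega)
      · rw [hs, sft_sub_one j rfl, ← hs]; exact hmin' 4 (by omega) (by omega)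
    · exact hg0 ((memS 5 (by omega)).mpr (by omega))
    · rw [hs, sft_add_one j rfl, ← hs] at hg2; exact s7S hg2
  have hTGT : ∀ g, ¬ CTG w T g := by
    rintro g ⟨hg0, hg1, hg2, hg3, hg4⟩
    rcases gcase g (Or.inr hg1) with rfl | rfl | rfl | rfl | rfl
    · refine hg3 ?_ ?_
      · rw [hs, sft_add_two j rfl, ← hs]; exact (memT 4 (by omega)).mpr (by omega)
      · rw [hs, sft_add_one j rfl, ← hs]; exact hmin' 2 (by omega) (by omega)
    · exact hg0 ((memT 3 (by omega)).mpr (by omega))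
    · exact hg0 ((memT 4 (by omega)).mpr (by omega))
    · exact hg0 ((memT 5 (by omega)).mpr (by omega))
    · rw [hs, sft_add_one j rfl, ← hs] at hg2; exact s7T hg2
  have hBriS : CBri S (s 2) := by
    refine ⟨(memS 2 (by omega)).mpr (by omega), ?_, ?_⟩
    · rw [hs, sft_sub_one j rfl, ← hs]; exact (memS 1 (by omega)).mpr (by omega)
    · rw [hs, sft_add_one j rfl, ← hs]; exact (memS 3 (by omega)).mpr (by omega)
  have hBriT : CBri T (s 4) := by
    refine ⟨(memT 4 (by omega)).mpr (by omega), ?_, ?_⟩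
    · rw [hs, sft_sub_one j rfl, ← hs]; exact (memT 3 (by omega)).mpr (by omega)
    · rw [hs, sft_add_one j rfl, ← hs]; exact (memT 5 (by omega)).mpr (by omega)
  have hPotS : CPot w S := ⟨s 2, hBriS, fun g hg => absurd hg (hTGS g)⟩
  have hPotT : CPot w T := ⟨s 4, hBriT, fun g hg => absurd hg (hTGT g)⟩
  have kcaseS : ∀ k : Fin n, k ∈ S → k = s 1 ∨ k = s 2 ∨ k = s 3 ∨ k = s 5 := by
    intro k hk
    rw [hS, hE, Finset.mem_insert, Finset.mem_insert, Finset.mem_insert,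
      Finset.mem_singleton] at hk
    tauto
  have kcaseT : ∀ k : Fin n, k ∈ T → k = s 1 ∨ k = s 3 ∨ k = s 4 ∨ k = s 5 := by
    intro k hk
    rw [hT, hE, Finset.mem_insert, Finset.mem_insert, Finset.mem_insert,
      Finset.mem_singleton] at hk
    tauto
  have hSBS : CSB w S (s 2) := by
    refine ⟨hBriS, fun k hk => ?_⟩
    rcases kcaseS k hk.1 with rfl | rfl | rfl | rfl
    · exfalso
      have := hk.2.1
      rw [hs, sft_sub_one j rfl, ← hs] at this
      exact absurd ((memS 0 (by omega)).mp this) (by omega)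
    · exact le_refl _
    · exfalso
      have := hk.2.2
      rw [hs, sft_add_one j rfl, ← hs] at this
      exact absurd ((memS 4 (by omega)).mp this) (by omega)
    · exfalso
      have := hk.2.2
      rw [hs, sft_add_one j rfl, ← hs] at this
      exact absurd ((memS 6 (by omega)).mp this) (by omega)
  have hSBT : CSB w T (s 4) := by
    refine ⟨hBriT, fun k hk => ?_⟩
    rcases kcaseT k hk.1 with rfl | rfl | rfl | rfl
    · exfalso
      have := hk.2.1
      rw [hs, sft_sub_one j rfl, ← hs] at this
      exact absurd ((memT 0 (by omega)).mp this) (by omega)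
    · exfalso
      have := hk.2.1
      rw [hs, sft_sub_one j rfl, ← hs] at this
      exact absurd ((memT 2 (by omega)).mp this) (by omega)
    · exact le_refl _
    · exfalso
      have := hk.2.2
      rw [hs, sft_add_one j rfl, ← hs] at this
      exact absurd ((memT 6 (by omega)).mp this) (by omega)
  have h2E : s 2 ∉ E := by
    rw [hE, Finset.mem_insert, Finset.mem_insert, Finset.mem_singleton,
      key 2 1 (by omega) (by omega), key 2 3 (by omega) (by omega), key 2 5 (by omega) (by omega)]
    omega
  have h4E : s 4 ∉ E := by
    rw [hE, Finset.mem_insert, Finset.mem_insert, Finset.mem_singleton,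
      key 4 1 (by omega) (by omega), key 4 3 (by omega) (by omega), key 4 5 (by omega) (by omega)]
    omega
  have her : S.erase (s 2) = T.erase (s 4) := by
    rw [hS, hT, Finset.erase_insert h2E, Finset.erase_insert h4E]
  have hST := hgood S T hPotS hPotT (s 2) (s 4) hSBS hSBT her
  have : s 2 ∈ T := hST ▸ (memS 2 (by omega)).mpr (by omega)
  exact absurd ((memT 2 (by omega)).mp this) (by omega)


lemma neg_four (w : Fin 4 → ℕ) (hw : Function.Injective w) : ¬ CGood 4 w := by
  intro hgood
  obtain ⟨j, -, hmin⟩ := Finset.exists_min_image Finset.univ w ⟨0, Finset.mem_univ 0⟩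
  set s : ℕ → Fin 4 := sft j with hs
  have key : ∀ a b : ℕ, a < 4 → b < 4 → (s a = s b ↔ a = b) :=
    fun a b ha hb => sft_inj ha hb
  have hj0 : s 0 = j := by rw [hs, sft, Nat.cast_zero, add_zero]
  have hmin' : ∀ a : ℕ, a < 4 → a ≠ 0 → w (s 0) < w (s a) := by
    intro a ha h0
    refine lt_of_le_of_ne (by rw [hj0]; exact hmin _ (Finset.mem_univ _)) ?_
    intro h
    exact h0 (((key 0 a (by omega) ha).mp (hw h)).symm)
  have w40 : s 4 = s 0 := by rw [hs, sft, sft, shift_eq_iff]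
  have w51 : s 5 = s 1 := by rw [hs, sft, sft, shift_eq_iff]
  have e1m2 : s 1 - 2 = s 3 := by rw [hs, sft, sft, add_sub_assoc]; congr 1
  have e0m1 : s 0 - 1 = s 3 := by rw [hs, sft, sft, add_sub_assoc]; congr 1
  set E : Finset (Fin 4) := {s 0, s 2} with hE
  set S : Finset (Fin 4) := insert (s 1) E with hS
  set T : Finset (Fin 4) := insert (s 3) E with hT
  have memS : ∀ a : ℕ, a < 4 → (s a ∈ S ↔ a = 0 ∨ a = 1 ∨ a = 2) := by
    intro a ha
    rw [hS, hE, Finset.mem_insert, Finset.mem_insert, Finset.mem_singleton,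
      key a 1 ha (by omega), key a 0 ha (by omega), key a 2 ha (by omega)]
    tauto
  have memT : ∀ a : ℕ, a < 4 → (s a ∈ T ↔ a = 0 ∨ a = 2 ∨ a = 3) := by
    intro a ha
    rw [hT, hE, Finset.mem_insert, Finset.mem_insert, Finset.mem_singleton,
      key a 3 ha (by omega), key a 0 ha (by omega), key a 2 ha (by omega)]
    tauto
  have gcase : ∀ g : Fin 4, g - 1 ∈ S ∨ g - 1 ∈ T →
      g = s 1 ∨ g = s 2 ∨ g = s 3 ∨ g = s 4 := by
    intro g hg
    have hmem : g - 1 = s 0 ∨ g - 1 = s 1 ∨ g - 1 = s 2 ∨ g - 1 = s 3 := by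
      rcases hg with hg | hg
      · rw [hS, hE, Finset.mem_insert, Finset.mem_insert, Finset.mem_singleton] at hg
        tauto
      · rw [hT, hE, Finset.mem_insert, Finset.mem_insert, Finset.mem_singleton] at hg
        tauto
    have hgg : ∀ a : ℕ, g - 1 = s a → g = s (a + 1) := by
      intro a ha
      rw [hs, ← sft_add_one j rfl, ← hs, ← ha, sub_add_cancel]
    rcases hmem with h | h | h | h
    exacts [Or.inl (hgg 0 h), Or.inr (Or.inl (hgg 1 h)), Or.inr (Or.inr (Or.inl (hgg 2 h))),
      Or.inr (Or.inr (Or.inr (hgg 3 h)))]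
  have hTGS : ∀ g, ¬ CTG w S g := by
    rintro g ⟨hg0, hg1, hg2, hg3, hg4⟩
    rcases gcase g (Or.inl hg1) with rfl | rfl | rfl | rfl
    · exact hg0 ((memS 1 (by omega)).mpr (by omega))
    · exact hg0 ((memS 2 (by omega)).mpr (by omega))
    · refine hg3 ?_ ?_
      · rw [hs, sft_add_two j rfl, ← hs, w51]; exact (memS 1 (by omega)).mpr (by omega)
      · rw [hs, sft_add_one j rfl, ← hs, w40]; exact hmin' 3 (by omega) (by omega)
    · exact hg0 (by rw [w40]; exact (memS 0 (by omega)).mpr (by omega))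
  have hTGT : ∀ g, ¬ CTG w T g := by
    rintro g ⟨hg0, hg1, hg2, hg3, hg4⟩
    rcases gcase g (Or.inr hg1) with rfl | rfl | rfl | rfl
    · refine hg4 ?_ ?_
      · rw [e1m2]; exact (memT 3 (by omega)).mpr (by omega)
      · rw [hs, sft_sub_one j rfl, ← hs]; exact hmin' 1 (by omega) (by omega)
    · exact hg0 ((memT 2 (by omega)).mpr (by omega))
    · exact hg0 ((memT 3 (by omega)).mpr (by omega))
    · exact hg0 (by rw [w40]; exact (memT 0 (by omega)).mpr (by omega))
  have hBriS : CBri S (s 1) := by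
    refine ⟨(memS 1 (by omega)).mpr (by omega), ?_, ?_⟩
    · rw [hs, sft_sub_one j rfl, ← hs]; exact (memS 0 (by omega)).mpr (by omega)
    · rw [hs, sft_add_one j rfl, ← hs]; exact (memS 2 (by omega)).mpr (by omega)
  have hBriT : CBri T (s 3) := by
    refine ⟨(memT 3 (by omega)).mpr (by omega), ?_, ?_⟩
    · rw [hs, sft_sub_one j rfl, ← hs]; exact (memT 2 (by omega)).mpr (by omega)
    · rw [hs, sft_add_one j rfl, ← hs, w40]; exact (memT 0 (by omega)).mpr (by omega)
  have hPotS : CPot w S := ⟨s 1, hBriS, fun g hg => absurd hg (hTGS g)⟩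
  have hPotT : CPot w T := ⟨s 3, hBriT, fun g hg => absurd hg (hTGT g)⟩
  have hSBS : CSB w S (s 1) := by
    refine ⟨hBriS, fun k hk => ?_⟩
    have hkc : k = s 1 ∨ k = s 0 ∨ k = s 2 := by
      have := hk.1
      rw [hS, hE, Finset.mem_insert, Finset.mem_insert, Finset.mem_singleton] at this
      tauto
    rcases hkc with rfl | rfl | rfl
    · exact le_refl _
    · exfalso
      have := hk.2.1
      rw [e0m1] at this
      exact absurd ((memS 3 (by omega)).mp this) (by omega)
    · exfalso
      have := hk.2.2
      rw [hs, sft_add_one j rfl, ← hs] at this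
      exact absurd ((memS 3 (by omega)).mp this) (by omega)
  have hSBT : CSB w T (s 3) := by
    refine ⟨hBriT, fun k hk => ?_⟩
    have hkc : k = s 3 ∨ k = s 0 ∨ k = s 2 := by
      have := hk.1
      rw [hT, hE, Finset.mem_insert, Finset.mem_insert, Finset.mem_singleton] at this
      tauto
    rcases hkc with rfl | rfl | rfl
    · exact le_refl _
    · exfalso
      have := hk.2.2
      rw [hs, sft_add_one j rfl, ← hs] at this
      exact absurd ((memT 1 (by omega)).mp this) (by omega)
    · exfalso
      have := hk.2.1
      rw [hs, sft_sub_one j rfl, ← hs] at this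
      exact absurd ((memT 1 (by omega)).mp this) (by omega)
  have h1E : s 1 ∉ E := by
    rw [hE, Finset.mem_insert, Finset.mem_singleton,
      key 1 0 (by omega) (by omega), key 1 2 (by omega) (by omega)]
    omega
  have h3E : s 3 ∉ E := by
    rw [hE, Finset.mem_insert, Finset.mem_singleton,
      key 3 0 (by omega) (by omega), key 3 2 (by omega) (by omega)]
    omega
  have her : S.erase (s 1) = T.erase (s 3) := by
    rw [hS, hT, Finset.erase_insert h1E, Finset.erase_insert h3E]
  have hST := hgood S T hPotS hPotT (s 1) (s 3) hSBS hSBT her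
  have : s 1 ∈ T := hST ▸ (memS 1 (by omega)).mpr (by omega)
  exact absurd ((memT 1 (by omega)).mp this) (by omega)


set_option maxRecDepth 40000 in
lemma good_three : CGood 3 Fin.val := by decide

set_option maxRecDepth 40000 in
lemma good_five : CGood 5 Fin.val := by decide

set_option maxRecDepth 40000 in
lemma good_six : CGood 6 Fin.val := by decide

end Cyc2
set_option maxRecDepth 40000 in
/-- **Proposition 4.3.** For `n ≥ 3`, the edge ideal of the `n`-cycle is bridge-friendly
iff `n ∈ {3, 5, 6}`. -/
theorem cycle_bridgeFriendly_iff (n : ℕ) (hn : 3 ≤ n) :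
    BridgeFriendly (edgeGens (SimpleGraph.cycleGraph n)) ↔ n = 3 ∨ n = 5 ∨ n = 6 := by
  haveI : NeZero n := ⟨by omega⟩
  rw [bf_iff hn]
  constructor
  · rintro ⟨w, hw, hgood⟩
    by_contra hne
    push_neg at hne
    have h47 : n = 4 ∨ 7 ≤ n := by omega
    rcases h47 with rfl | h7
    · exact neg_four w hw hgood
    · exact neg_seven h7 w hw hgood
  · rintro (rfl | rfl | rfl)
    · exact ⟨Fin.val, Fin.val_injective, good_three⟩
    · exact ⟨Fin.val, Fin.val_injective, good_five⟩
    · exact ⟨Fin.val, Fin.val_injective, good_six⟩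

end ChauHaMaithani
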